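/- Let G be a finite directed graph and define the p-vector x by x_i = number of outgoing directed spanning trees of G rooted at v_i. Then L_1 x = 0, where L_1 = D_in - A_v is the Laplacian. -/

import Mathlib

open Matrix

variable {p q : ℕ}

/-- In-incidence matrix: `[N_in]_{ki} = 1` iff edge `k` points to vertex `i`. -/
def Nin (tgt : Fin q → Fin p) : Matrix (Fin q) (Fin p) ℝ :=
  Matrix.of fun k i => if tgt k = i then (1 : ℝ) else 0

/-- Out-incidence matrix: `[M_out]_{ik} = 1` iff edge `k` points from vertex `i`. -/
def Mout (src : Fin q → Fin p) : Matrix (Fin p) (Fin q) ℝ :=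
  Matrix.of fun i k => if src k = i then (1 : ℝ) else 0

/-- Diagonal in-degree matrix. -/
def Din (tgt : Fin q → Fin p) : Matrix (Fin p) (Fin p) ℝ :=
  Matrix.diagonal fun i => (Fintype.card {k : Fin q // tgt k = i} : ℝ)

/-- Diagonal out-degree matrix. -/
def Dout (src : Fin q → Fin p) : Matrix (Fin p) (Fin p) ℝ :=
  Matrix.diagonal fun i => (Fintype.card {k : Fin q // src k = i} : ℝ)

/-- Vertex-adjacency matrix: `[A_v]_{ij} = 1` iff there is an edge from `i` to `j`. -/
def Av (src tgt : Fin q → Fin p) : Matrix (Fin p) (Fin p) ℝ :=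
  Matrix.of fun i j => if ∃ k, src k = i ∧ tgt k = j then (1 : ℝ) else 0

/-- `S` is the edge set of an outgoing directed spanning tree rooted at `r`:
every non-root vertex has in-degree `1` in `S`, the root has in-degree `0`,
and there are no directed cycles among the edges of `S`. -/
def IsOutTree (src tgt : Fin q → Fin p) (r : Fin p) (S : Finset (Fin q)) : Prop :=
  (∀ i, i ≠ r → ∃! k, k ∈ S ∧ tgt k = i) ∧
  (∀ k ∈ S, tgt k ≠ r) ∧
  (∀ i, ¬ Relation.TransGen (fun a b => ∃ k ∈ S, src k = a ∧ tgt k = b) i i)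

/-- `S` is the edge set of an incoming directed spanning tree rooted at `r`:
every non-root vertex has out-degree `1` in `S`, the root has out-degree `0`,
and there are no directed cycles among the edges of `S`. -/
def IsInTree (src tgt : Fin q → Fin p) (r : Fin p) (S : Finset (Fin q)) : Prop :=
  (∀ i, i ≠ r → ∃! k, k ∈ S ∧ src k = i) ∧
  (∀ k ∈ S, src k ≠ r) ∧
  (∀ i, ¬ Relation.TransGen (fun a b => ∃ k ∈ S, src k = a ∧ tgt k = b) i i)


open Relation Finset

namespace TreeCountAux

variable {p q : ℕ} (src tgt : Fin q → Fin p)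

/-- Helper relation: edge relation of a finset of edges. -/
def Rel (S : Finset (Fin q)) : Fin p → Fin p → Prop :=
  fun a b => ∃ k ∈ S, src k = a ∧ tgt k = b

def IsOutTree' (r : Fin p) (S : Finset (Fin q)) : Prop :=
  (∀ i, i ≠ r → ∃! k, k ∈ S ∧ tgt k = i) ∧
  (∀ k ∈ S, tgt k ≠ r) ∧
  (∀ i, ¬ Relation.TransGen (Rel src tgt S) i i)

/-- Good: every vertex has a unique in-edge in `U`, and every vertex is reachable from `i`. -/
def Good (i : Fin p) (U : Finset (Fin q)) : Prop :=
  (∀ v, ∃! k, k ∈ U ∧ tgt k = v) ∧ ∀ v, ReflTransGen (Rel src tgt U) i v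

variable {src tgt}

lemma rel_mono {S T : Finset (Fin q)} (h : S ⊆ T) {a b : Fin p} (hr : Rel src tgt S a b) :
    Rel src tgt T a b := by
  obtain ⟨k, hk, h1, h2⟩ := hr; exact ⟨k, Finset.mem_of_subset h hk, h1, h2⟩

lemma tree_reach {r : Fin p} {S : Finset (Fin q)} (h : IsOutTree' src tgt r S) :
    ∀ v, ReflTransGen (Rel src tgt S) r v := by
  obtain ⟨hdeg, hroot, hacyc⟩ := h
  have hirr : IsIrrefl (Fin p) (TransGen (Rel src tgt S)) := ⟨hacyc⟩
  have hwf : WellFounded (TransGen (Rel src tgt S)) :=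
    Finite.wellFounded_of_trans_of_irrefl _
  intro v
  induction v using hwf.induction with
  | _ v ih =>
    by_cases hv : v = r
    · subst hv; exact .refl
    · obtain ⟨k, ⟨hk, hkt⟩, _⟩ := hdeg v hv
      have hrel : Rel src tgt S (src k) v := ⟨k, hk, rfl, hkt⟩
      exact (ih (src k) (.single hrel)).tail hrel

section Pred

variable (src) {U : Finset (Fin q)} (hU : ∀ v, ∃! k, k ∈ U ∧ tgt k = v)

/-- The unique in-edge of a vertex. -/
noncomputable def E (v : Fin p) : Fin q := (hU v).exists.choose

lemma E_mem (v : Fin p) : E hU v ∈ U := (hU v).exists.choose_spec.1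

lemma E_tgt (v : Fin p) : tgt (E hU v) = v := (hU v).exists.choose_spec.2

lemma E_eq {v : Fin p} {k : Fin q} (hk : k ∈ U) (ht : tgt k = v) : k = E hU v :=
  (hU v).unique ⟨hk, ht⟩ ⟨E_mem hU v, E_tgt hU v⟩

/-- Predecessor function. -/
noncomputable def pr (hU' : ∀ v, ∃! k, k ∈ U ∧ tgt k = v) (v : Fin p) : Fin p := src (E hU' v)

lemma rel_pr (v : Fin p) : Rel src tgt U (pr src hU v) v :=
  ⟨E hU v, E_mem hU v, rfl, E_tgt hU v⟩

lemma pr_chain (j : ℕ) (v : Fin p) :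
    ReflTransGen (Rel src tgt U) ((pr src hU)^[j] v) v := by
  induction j with
  | zero => exact .refl
  | succ n ih =>
    rw [Function.iterate_succ_apply']
    exact ReflTransGen.head (rel_pr src hU _) ih

lemma path_pr {S : Finset (Fin q)} (hS : S ⊆ U) {a b : Fin p}
    (h : ReflTransGen (Rel src tgt S) a b) :
    ∃ n, a = (pr src hU)^[n] b ∧ ∀ j < n, E hU ((pr src hU)^[j] b) ∈ S := by
  induction h with
  | refl => exact ⟨0, rfl, by omega⟩
  | tail hab hstep ih =>
    obtain ⟨k, hkS, hks, hkt⟩ := hstep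
    subst hks; subst hkt
    have hkE : k = E hU (tgt k) := E_eq hU (hS hkS) rfl
    obtain ⟨n, hn1, hn2⟩ := ih
    have hprb : pr src hU (tgt k) = src k := by rw [pr, ← hkE]
    refine ⟨n + 1, ?_, ?_⟩
    · rw [Function.iterate_add_apply, Function.iterate_one, hprb, hn1]
    · intro j hj
      cases j with
      | zero => simpa using hkE ▸ hkS
      | succ m =>
        rw [Function.iterate_add_apply, Function.iterate_one, hprb]
        exact hn2 m (by omega)

lemma cycle_pr {S : Finset (Fin q)} (hS : S ⊆ U) {v : Fin p}
    (h : TransGen (Rel src tgt S) v v) :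
    ∃ n, 0 < n ∧ (pr src hU)^[n] v = v ∧ ∀ j < n, E hU ((pr src hU)^[j] v) ∈ S := by
  obtain ⟨y, hvy, hyv⟩ := TransGen.head'_iff.mp h
  obtain ⟨k, hkS, hks, hkt⟩ := hvy
  have hkE : k = E hU y := E_eq hU (hS hkS) hkt
  have hpry : pr src hU y = v := by rw [pr, ← hkE, hks]
  obtain ⟨n, hn1, hn2⟩ := path_pr src hU hS hyv
  refine ⟨n + 1, by omega, ?_, ?_⟩
  · rw [Function.iterate_succ_apply', ← hn1, hpry]
  · intro j hj
    rcases Nat.lt_succ_iff_lt_or_eq.mp hj with h' | h'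
    · exact hn2 j h'
    · subst h'; rw [← hn1, ← hkE]; exact hkS

end Pred

lemma iter_mod {α : Type*} {f : α → α} {v : α} {n : ℕ} (hn : 0 < n) (hf : f^[n] v = v)
    (s : ℕ) : f^[s] v = f^[s % n] v := by
  induction s using Nat.strong_induction_on with
  | _ s ih =>
    by_cases hs : s < n
    · rw [Nat.mod_eq_of_lt hs]
    · have h1 : s = (s - n) + n := by omega
      have h2 : s % n = (s - n) % n := by
        conv_lhs => rw [h1]
        rw [Nat.add_mod_right]
      rw [h2]
      conv_lhs => rw [h1]
      rw [Function.iterate_add_apply, hf, ih (s - n) (by omega)]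

end TreeCountAux

namespace TreeCountAux2
open TreeCountAux

variable {p q : ℕ} {src tgt : Fin q → Fin p}

lemma good_insertA {i : Fin p} {e : Fin q} {T : Finset (Fin q)} (he : tgt e = i)
    (hT : IsOutTree' src tgt i T) : Good src tgt i (insert e T) := by
  obtain ⟨hdeg, hroot, hacyc⟩ := hT
  constructor
  · intro v
    by_cases hv : v = i
    · subst hv
      refine ⟨e, ⟨Finset.mem_insert_self _ _, he⟩, ?_⟩
      rintro k ⟨hk, hkt⟩
      rcases Finset.mem_insert.mp hk with h | h
      · exact h
      · exact absurd hkt (hroot k h)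
    · obtain ⟨k, ⟨hk, hkt⟩, huniq⟩ := hdeg v hv
      refine ⟨k, ⟨Finset.mem_insert_of_mem hk, hkt⟩, ?_⟩
      rintro k' ⟨hk', hkt'⟩
      rcases Finset.mem_insert.mp hk' with h | h
      · exact absurd (by rw [← hkt', h, he]) hv
      · exact huniq k' ⟨h, hkt'⟩
  · intro v
    exact Relation.ReflTransGen.mono (r := Rel src tgt T) (p := Rel src tgt (insert e T))
      (fun a b h => rel_mono (Finset.subset_insert e T) h) _ _ (tree_reach ⟨hdeg, hroot, hacyc⟩ v)

lemma good_insertB {i : Fin p} {f : Fin q} {T : Finset (Fin q)} (hf : src f = i)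
    (hT : IsOutTree' src tgt (tgt f) T) : Good src tgt i (insert f T) := by
  obtain ⟨hdeg, hroot, hacyc⟩ := hT
  constructor
  · intro v
    by_cases hv : v = tgt f
    · subst hv
      refine ⟨f, ⟨Finset.mem_insert_self _ _, rfl⟩, ?_⟩
      rintro k ⟨hk, hkt⟩
      rcases Finset.mem_insert.mp hk with h | h
      · exact h
      · exact absurd hkt (hroot k h)
    · obtain ⟨k, ⟨hk, hkt⟩, huniq⟩ := hdeg v hv
      refine ⟨k, ⟨Finset.mem_insert_of_mem hk, hkt⟩, ?_⟩
      rintro k' ⟨hk', hkt'⟩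
      rcases Finset.mem_insert.mp hk' with h | h
      · exact absurd (by rw [← hkt', h]) hv
      · exact huniq k' ⟨h, hkt'⟩
  · intro v
    have h1 : Relation.ReflTransGen (Rel src tgt (insert f T)) (tgt f) v :=
      Relation.ReflTransGen.mono (r := Rel src tgt T) (p := Rel src tgt (insert f T))
        (fun a b h => rel_mono (Finset.subset_insert f T) h) _ _ (tree_reach ⟨hdeg, hroot, hacyc⟩ v)
    exact h1.head ⟨f, Finset.mem_insert_self _ _, hf, rfl⟩

lemma erase_tree_A {i : Fin p} {U : Finset (Fin q)}
    (hU : ∀ v, ∃! k, k ∈ U ∧ tgt k = v)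
    (hreach : ∀ v, Relation.ReflTransGen (Rel src tgt U) i v) :
    IsOutTree' src tgt i (U.erase (E hU i)) := by
  refine ⟨?_, ?_, ?_⟩
  · intro v hv
    refine ⟨E hU v, ⟨Finset.mem_erase.mpr ⟨fun h => hv ?_, E_mem hU v⟩, E_tgt hU v⟩, ?_⟩
    · rw [← E_tgt hU v, h, E_tgt hU i]
    · rintro k ⟨hk, hkt⟩
      exact E_eq hU (Finset.mem_of_mem_erase hk) hkt
  · intro k hk hkt
    exact (Finset.mem_erase.mp hk).1 (E_eq hU (Finset.mem_of_mem_erase hk) hkt)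
  · intro v hcyc
    obtain ⟨n, hn, hper, hmem⟩ := cycle_pr src hU (Finset.erase_subset _ _) hcyc
    obtain ⟨s, hs, -⟩ := path_pr src hU (Finset.Subset.refl U) (hreach v)
    have h2 : E hU ((pr src hU)^[s % n] v) ∈ U.erase (E hU i) :=
      hmem _ (Nat.mod_lt _ hn)
    have h3 : (pr src hU)^[s % n] v = i := by rw [← iter_mod hn hper s, ← hs]
    rw [h3] at h2
    exact (Finset.mem_erase.mp h2).1 rfl

lemma unique_f {i : Fin p} {U : Finset (Fin q)}
    (hU : ∀ v, ∃! k, k ∈ U ∧ tgt k = v) {f g : Fin q}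
    (hfU : f ∈ U) (hfs : src f = i)
    (hfr : Relation.ReflTransGen (Rel src tgt U) (tgt f) i)
    (hgU : g ∈ U) (hgs : src g = i)
    (hgr : Relation.ReflTransGen (Rel src tgt U) (tgt g) i) : f = g := by
  obtain ⟨a, ha, -⟩ := path_pr src hU (Finset.Subset.refl U) hfr
  obtain ⟨b, hb, -⟩ := path_pr src hU (Finset.Subset.refl U) hgr
  have hEf : f = E hU (tgt f) := E_eq hU hfU rfl
  have hEg : g = E hU (tgt g) := E_eq hU hgU rfl
  have hpf : pr src hU (tgt f) = i := by rw [pr, ← hEf, hfs]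
  have hpg : pr src hU (tgt g) = i := by rw [pr, ← hEg, hgs]
  have hfa : (pr src hU)^[a + 1] i = i := by
    rw [Function.iterate_succ_apply', ← ha, hpf]
  have hgb : (pr src hU)^[b + 1] i = i := by
    rw [Function.iterate_succ_apply', ← hb, hpg]
  have htfg : tgt f = tgt g := by
    have e1 : a + (b + 1) = b + (a + 1) := by omega
    calc tgt f = (pr src hU)^[a] i := ha
      _ = (pr src hU)^[a] ((pr src hU)^[b + 1] i) := by rw [hgb]
      _ = (pr src hU)^[a + (b + 1)] i := by rw [← Function.iterate_add_apply]
      _ = (pr src hU)^[b + (a + 1)] i := by rw [e1]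
      _ = (pr src hU)^[b] ((pr src hU)^[a + 1] i) := by rw [Function.iterate_add_apply]
      _ = (pr src hU)^[b] i := by rw [hfa]
      _ = tgt g := hb.symm
  rw [hEf, htfg, ← hEg]

lemma good_exists_f {i : Fin p} {U : Finset (Fin q)}
    (hU : ∀ v, ∃! k, k ∈ U ∧ tgt k = v)
    (hreach : ∀ v, Relation.ReflTransGen (Rel src tgt U) i v) :
    ∃ f, f ∈ U ∧ src f = i ∧ Relation.ReflTransGen (Rel src tgt U) (tgt f) i := by
  have hcyc : Relation.TransGen (Rel src tgt U) i i :=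
    Relation.TransGen.tail' (hreach (pr src hU i)) (rel_pr src hU i)
  obtain ⟨c, hic, hci⟩ := Relation.TransGen.head'_iff.mp hcyc
  obtain ⟨f, hfU, hfs, hft⟩ := hic
  exact ⟨f, hfU, hfs, by rw [hft]; exact hci⟩

lemma erase_tree_B {i : Fin p} {U : Finset (Fin q)}
    (hU : ∀ v, ∃! k, k ∈ U ∧ tgt k = v)
    (hreach : ∀ v, Relation.ReflTransGen (Rel src tgt U) i v)
    {f : Fin q} (hfU : f ∈ U) (hfs : src f = i)
    (hfr : Relation.ReflTransGen (Rel src tgt U) (tgt f) i) :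
    IsOutTree' src tgt (tgt f) (U.erase f) := by
  have hEf : f = E hU (tgt f) := E_eq hU hfU rfl
  refine ⟨?_, ?_, ?_⟩
  · intro v hv
    refine ⟨E hU v, ⟨Finset.mem_erase.mpr ⟨fun h => hv ?_, E_mem hU v⟩, E_tgt hU v⟩, ?_⟩
    · rw [← E_tgt hU v, h]
    · rintro k ⟨hk, hkt⟩
      exact E_eq hU (Finset.mem_of_mem_erase hk) hkt
  · intro k hk hkt
    exact (Finset.mem_erase.mp hk).1
      ((E_eq hU (Finset.mem_of_mem_erase hk) hkt).trans hEf.symm)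
  · intro v hcyc
    obtain ⟨n, hn, hper, hmem⟩ := cycle_pr src hU (Finset.erase_subset _ _) hcyc
    obtain ⟨s, hs, -⟩ := path_pr src hU (Finset.Subset.refl U) (hreach v)
    set P := pr src hU with hP
    have hx1 : P^[s + (n - 1)] v = P^[n - 1] i := by
      rw [Nat.add_comm, Function.iterate_add_apply, ← hs]
    have hxi : P (P^[s + (n - 1)] v) = i := by
      rw [(Function.iterate_succ_apply' P (s + (n - 1)) v).symm]
      have e1 : (s + (n - 1)).succ = s + n := by omega
      rw [e1, Function.iterate_add_apply, hper, ← hs]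
    have hmemx : E hU (P^[s + (n - 1)] v) ∈ U.erase f := by
      rw [hP, iter_mod hn hper (s + (n - 1))]
      exact hmem _ (Nat.mod_lt _ hn)
    have hgU : E hU (P^[s + (n - 1)] v) ∈ U := Finset.mem_of_mem_erase hmemx
    have hgs : src (E hU (P^[s + (n - 1)] v)) = i := hxi
    have hgr : Relation.ReflTransGen (Rel src tgt U) (tgt (E hU (P^[s + (n - 1)] v))) i := by
      rw [E_tgt hU, hx1]
      exact pr_chain src hU (n - 1) i
    have hfg : f = E hU (P^[s + (n - 1)] v) := unique_f hU hfU hfs hfr hgU hgs hgr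
    exact (Finset.mem_erase.mp hmemx).1 hfg.symm

end TreeCountAux2

namespace TreeCountAux3
open TreeCountAux TreeCountAux2

variable {p q : ℕ} {src tgt : Fin q → Fin p}

lemma isOutTree_not_mem_root {r : Fin p} {T : Finset (Fin q)} (hT : IsOutTree' src tgt r T)
    {k : Fin q} (hk : tgt k = r) : k ∉ T := fun h => hT.2.1 k h hk

noncomputable def PhiA (i : Fin p) :
    {e : Fin q // tgt e = i} × {S : Finset (Fin q) // IsOutTree' src tgt i S} →
      {U : Finset (Fin q) // Good src tgt i U} :=
  fun x => ⟨insert x.1.1 x.2.1, good_insertA x.1.2 x.2.2⟩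

lemma PhiA_bijective (i : Fin p) : Function.Bijective (PhiA (src := src) (tgt := tgt) i) := by
  constructor
  · rintro ⟨⟨e, he⟩, ⟨T, hT⟩⟩ ⟨⟨e', he'⟩, ⟨T', hT'⟩⟩ h
    have hval : insert e T = insert e' T' := congrArg Subtype.val h
    have hGood : Good src tgt i (insert e' T') := good_insertA he' hT'
    have hee : e = e' := by
      refine (hGood.1 i).unique ⟨?_, he⟩ ⟨Finset.mem_insert_self _ _, he'⟩
      rw [← hval]; exact Finset.mem_insert_self _ _
    subst hee
    have hTT : T = T' := by
      rw [← Finset.erase_insert (isOutTree_not_mem_root hT he), hval,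
        Finset.erase_insert (isOutTree_not_mem_root hT' he)]
    subst hTT
    rfl
  · rintro ⟨U, hU, hreach⟩
    refine ⟨⟨⟨E hU i, E_tgt hU i⟩, ⟨U.erase (E hU i), erase_tree_A hU hreach⟩⟩, ?_⟩
    exact Subtype.ext (Finset.insert_erase (E_mem hU i))

noncomputable def PhiB (i : Fin p) :
    ((k : {k : Fin q // src k = i}) × {S : Finset (Fin q) // IsOutTree' src tgt (tgt k.1) S}) →
      {U : Finset (Fin q) // Good src tgt i U} :=
  fun x => ⟨insert x.1.1 x.2.1, good_insertB x.1.2 x.2.2⟩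

lemma PhiB_bijective (i : Fin p) : Function.Bijective (PhiB (src := src) (tgt := tgt) i) := by
  constructor
  · rintro ⟨⟨f, hf⟩, ⟨T, hT⟩⟩ ⟨⟨g, hg⟩, ⟨T', hT'⟩⟩ h
    have hval : insert f T = insert g T' := congrArg Subtype.val h
    have hGood : Good src tgt i (insert f T) := good_insertB hf hT
    have hfg : f = g := by
      refine unique_f hGood.1 (Finset.mem_insert_self _ _) hf ?_ ?_ hg ?_
      · exact Relation.ReflTransGen.mono (r := Rel src tgt T) (p := Rel src tgt (insert f T)) (fun a b hr => rel_mono (Finset.subset_insert f T) hr) _ _ (tree_reach hT i)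
      · rw [hval]; exact Finset.mem_insert_self _ _
      · have : Relation.ReflTransGen (Rel src tgt (insert g T')) (tgt g) i :=
          Relation.ReflTransGen.mono (r := Rel src tgt T') (p := Rel src tgt (insert g T')) (fun a b hr => rel_mono (Finset.subset_insert g T') hr) _ _ (tree_reach hT' i)
        rw [hval]
        exact this
    subst hfg
    have hTT : T = T' := by
      rw [← Finset.erase_insert (isOutTree_not_mem_root hT rfl), hval,
        Finset.erase_insert (isOutTree_not_mem_root hT' rfl)]
    subst hTT
    rfl
  · rintro ⟨U, hU, hreach⟩
    obtain ⟨f, hfU, hfs, hfr⟩ := good_exists_f hU hreach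
    refine ⟨⟨⟨f, hfs⟩, ⟨U.erase f, erase_tree_B hU hreach hfU hfs hfr⟩⟩, ?_⟩
    exact Subtype.ext (Finset.insert_erase hfU)

lemma card_eq (i : Fin p) :
    Nat.card ({e : Fin q // tgt e = i} × {S : Finset (Fin q) // IsOutTree' src tgt i S})
      = Nat.card ((k : {k : Fin q // src k = i}) ×
          {S : Finset (Fin q) // IsOutTree' src tgt (tgt k.1) S}) := by
  rw [Nat.card_eq_of_bijective _ (PhiA_bijective i),
    Nat.card_eq_of_bijective _ (PhiB_bijective i)]

lemma count_id (i : Fin p) :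
    Fintype.card {k : Fin q // tgt k = i} *
        Nat.card {S : Finset (Fin q) // IsOutTree' src tgt i S}
      = ∑ k : Fin q, (if src k = i then
          Nat.card {S : Finset (Fin q) // IsOutTree' src tgt (tgt k) S} else 0) := by
  classical
  letI : ∀ j : Fin p, Fintype {S : Finset (Fin q) // IsOutTree' src tgt j S} :=
    fun j => Fintype.ofFinite _
  rw [← Nat.card_eq_fintype_card, ← Nat.card_prod, card_eq i,
    Nat.card_eq_fintype_card, Fintype.card_sigma]
  rw [← Finset.sum_filter]
  simp only [← Nat.card_eq_fintype_card]
  exact (Finset.sum_subtype (Finset.univ.filter fun k => src k = i)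
    (fun k => by simp)
    (fun k => Nat.card {S : Finset (Fin q) // IsOutTree' src tgt (tgt k) S})).symm

end TreeCountAux3

/-- The vector `x` of numbers of outgoing directed spanning trees rooted at each vertex
satisfies `L₁ x = 0`, where `L₁ = D_in - A_v`. -/
theorem laplacian1_mulVec_tree_counts (p q : ℕ) (src tgt : Fin q → Fin p)
    (hloop : ∀ k, src k ≠ tgt k)
    (hsimple : Function.Injective fun k => (src k, tgt k)) :
    (Din tgt - Av src tgt) *ᵥ
      (fun i => (Nat.card {S : Finset (Fin q) // IsOutTree src tgt i S} : ℝ)) = 0 := by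
  classical
  have hEq : ∀ r : Fin p, Nat.card {S : Finset (Fin q) // IsOutTree src tgt r S}
      = Nat.card {S : Finset (Fin q) // TreeCountAux.IsOutTree' src tgt r S} := fun r => rfl
  funext i
  rw [Matrix.sub_mulVec]
  simp only [Pi.sub_apply, Pi.zero_apply, sub_eq_zero]
  set x : Fin p → ℝ :=
    fun i => (Nat.card {S : Finset (Fin q) // IsOutTree src tgt i S} : ℝ) with hx
  rw [Din, Matrix.mulVec_diagonal]
  have hAv : (Av src tgt *ᵥ x) i = ∑ k : Fin q, (if src k = i then x (tgt k) else 0) := by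
    have h1 : ∀ j, Av src tgt i j
        = ∑ k : Fin q, (if src k = i ∧ tgt k = j then (1 : ℝ) else 0) := by
      intro j
      by_cases h : ∃ k, src k = i ∧ tgt k = j
      · obtain ⟨k0, hk0⟩ := h
        rw [show Av src tgt i j = 1 from if_pos ⟨k0, hk0⟩]
        rw [Finset.sum_eq_single k0]
        · simp [hk0.1, hk0.2]
        · intro k _ hk
          rw [if_neg]
          rintro ⟨ha, hb⟩
          exact hk (hsimple (show (src k, tgt k) = (src k0, tgt k0) by
            rw [ha, hb, hk0.1, hk0.2]))
        · simp
      · rw [show Av src tgt i j = 0 from if_neg h]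
        exact (Finset.sum_eq_zero fun k _ => if_neg fun hc => h ⟨k, hc⟩).symm
    show ∑ j : Fin p, Av src tgt i j * x j = _
    rw [Finset.sum_congr rfl fun j _ => by rw [h1 j, Finset.sum_mul]]
    rw [Finset.sum_comm]
    refine Finset.sum_congr rfl fun k _ => ?_
    by_cases hsk : src k = i
    · simp only [hsk, true_and, ite_mul, one_mul, zero_mul, if_pos]
      simp [Finset.sum_ite_eq' Finset.univ (tgt k) x]
    · simp [hsk]
  rw [hAv]
  have key := congrArg (Nat.cast (R := ℝ)) (TreeCountAux3.count_id (src := src) (tgt := tgt) i)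
  push_cast at key
  simp only [← hEq] at key
  rw [show x i = (Nat.card {S : Finset (Fin q) // IsOutTree src tgt i S} : ℝ) from rfl]
  rw [key]
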